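/- Let Φ be an IFS with λ_Φ < 1, a ∈ Ω_k, and ε ≥ 0. Define Ω^ε_{Φ,a} := ⋂_{m≥1} closure(⋃_{n≥m} ⋃_{ω ∈ I^{(n)}_{Φ,a}(ε)} {φ_ω(0)}). Then for every n ∈ ℕ, Ω^ε_{Φ,a} is covered by the finitely many closed intervals of length 2(1+2r_Φ)·λ_Φ^n centered at the points φ_ω(0) for ω ∈ I^{(n)}_{Φ,a}(ε). -/

import Mathlib

open Filter Set Topology
open scoped NNReal

noncomputable def pcIdx {k : ℕ} (hk : 2 ≤ k) (a : Fin (k-1) → ℝ) (x : ℝ) : Fin k :=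
  ⟨(Finset.univ.filter fun i => a i ≤ x).card, by
    have h := Finset.card_filter_le (Finset.univ : Finset (Fin (k-1))) (fun i => a i ≤ x)
    simp only [Finset.card_univ, Fintype.card_fin] at h
    omega⟩

/-- The piecewise contraction `f_{Φ,a}` determined by the IFS `φ` and partition points `a`. -/
noncomputable def pc {k : ℕ} (hk : 2 ≤ k) (φ : Fin k → ℝ → ℝ) (a : Fin (k-1) → ℝ) (x : ℝ) : ℝ :=
  φ (pcIdx hk a x) x

/-- `φ_ω = φ_{ω_n} ∘ ⋯ ∘ φ_{ω_1}`. -/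
def wcomp {k : ℕ} (φ : Fin k → ℝ → ℝ) {n : ℕ} (ω : Fin n → Fin k) (x : ℝ) : ℝ :=
  (List.ofFn ω).foldl (fun y i => φ i y) x

/-- `(Φ,a)` has a singular connection: `φ_ω(S_a) ∩ S_a ≠ ∅` for some nonempty word `ω`. -/
def hasSingConn {k : ℕ} (φ : Fin k → ℝ → ℝ) (a : Fin (k-1) → ℝ) : Prop :=
  ∃ n : ℕ, ∃ ω : Fin (n+1) → Fin k, ∃ i j : Fin (k-1), wcomp φ ω (a i) = a j

/-- `max_i |z i|`. -/
noncomputable def maxAbs {k : ℕ} (hk : 2 ≤ k) (z : Fin k → ℝ) : ℝ :=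
  Finset.univ.sup' (Finset.univ_nonempty_iff.mpr ⟨⟨0, by omega⟩⟩) fun i => |z i|

/-- The set of itineraries of order `n` of `(Φ,a)`. -/
noncomputable def itin {k : ℕ} (hk : 2 ≤ k) (φ : Fin k → ℝ → ℝ) (a : Fin (k-1) → ℝ) (n : ℕ) :
    Set (Fin n → Fin k) :=
  {ω | ∃ x : ℝ, (∀ j < n, (pc hk φ a)^[j] x ∉ Set.range a) ∧
       ∀ j : Fin n, ω j = pcIdx hk a ((pc hk φ a)^[(j : ℕ)] x)}

/-- `I^{(n)}_{Φ,a}(ε) = ⋃_{|δ| ≤ ε} I^{(n)}_{Φ,a+δ}`. -/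
noncomputable def itinE {k : ℕ} (hk : 2 ≤ k) (φ : Fin k → ℝ → ℝ) (a : Fin (k-1) → ℝ)
    (ε : ℝ) (n : ℕ) : Set (Fin n → Fin k) :=
  {ω | ∃ δ : ℝ, |δ| ≤ ε ∧ ω ∈ itin hk φ (fun i => a i + δ) n}

/-- `Ω^ε_{Φ,a} = ⋂_{m ≥ 1} closure (⋃_{n ≥ m} ⋃_{ω ∈ I^{(n)}(ε)} {φ_ω(0)})`. -/
noncomputable def omegaSet {k : ℕ} (hk : 2 ≤ k) (φ : Fin k → ℝ → ℝ) (a : Fin (k-1) → ℝ)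
    (ε : ℝ) : Set ℝ :=
  ⋂ m : ℕ, closure {y : ℝ | ∃ n, m ≤ n ∧ ∃ ω ∈ itinE hk φ a ε n, wcomp φ ω 0 = y}

/-- The ω-limit set of `x` under `f`. -/
def omegaLimitPt (f : ℝ → ℝ) (x : ℝ) : Set ℝ :=
  {y | MapClusterPt y Filter.atTop fun n => f^[n] x}

/-- `f` is asymptotically periodic. -/
def AsympPeriodic (f : ℝ → ℝ) : Prop :=
  {x : ℝ | ∃ p : ℕ, 1 ≤ p ∧ f^[p] x = x}.Finite ∧
  ∀ x : ℝ, ∃ z : ℝ, ∃ p : ℕ, 1 ≤ p ∧ f^[p] z = z ∧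
    omegaLimitPt f x = Set.range fun j : Fin p => f^[(j : ℕ)] z

/-- `f` is asymptotically periodic on the invariant set `s`. -/
def AsympPeriodicOn (f : ℝ → ℝ) (s : Set ℝ) : Prop :=
  {x ∈ s | ∃ p : ℕ, 1 ≤ p ∧ f^[p] x = x}.Finite ∧
  ∀ x ∈ s, ∃ z : ℝ, ∃ p : ℕ, 1 ≤ p ∧ f^[p] z = z ∧
    omegaLimitPt f x = Set.range fun j : Fin p => f^[(j : ℕ)] z

lemma foldl_lip {k : ℕ} (φ : Fin k → ℝ → ℝ) (lam : ℝ≥0)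
    (hlip : ∀ i, LipschitzWith lam (φ i)) :
    ∀ l : List (Fin k), LipschitzWith (lam ^ l.length)
      (fun x : ℝ => l.foldl (fun y i => φ i y) x) := by
  intro l
  induction l with
  | nil => simp; exact LipschitzWith.id
  | cons i l ih =>
      have := ih.comp (hlip i)
      simpa [pow_succ, Function.comp_def] using this

lemma foldl_bound {k : ℕ} (φ : Fin k → ℝ → ℝ) (r : ℝ)
    (hstep : ∀ (i : Fin k) (x : ℝ), |x| ≤ r → |φ i x| ≤ r) :
    ∀ (l : List (Fin k)) (x : ℝ), |x| ≤ r → |l.foldl (fun y i => φ i y) x| ≤ r := by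
  intro l
  induction l with
  | nil => intro x hx; simpa using hx
  | cons i l ih => intro x hx; exact ih _ (hstep i x hx)

lemma wcomp_split {k N m n : ℕ} (φ : Fin k → ℝ → ℝ) (h : N = m + n) (ω : Fin N → Fin k)
    (x : ℝ) :
    wcomp φ ω x = wcomp φ (fun j : Fin n => ω ⟨m + (j : ℕ), by omega⟩)
      (wcomp φ (fun j : Fin m => ω ⟨(j : ℕ), by omega⟩) x) := by
  subst h
  unfold wcomp
  rw [show (List.ofFn ω) = (List.ofFn fun j : Fin m => ω ⟨(j : ℕ), by omega⟩)
      ++ (List.ofFn fun j : Fin n => ω ⟨m + (j : ℕ), by omega⟩) from ?_,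
    List.foldl_append]
  rw [List.ofFn_add]
  congr 1

theorem stmt15 {k : ℕ} (hk : 2 ≤ k) (φ : Fin k → ℝ → ℝ) (lam : ℝ≥0) (hlam : lam < 1)
    (hlip : ∀ i, LipschitzWith lam (φ i)) (z : Fin k → ℝ) (hz : ∀ i, φ i (z i) = z i)
    (r : ℝ) (hr : r = ((1 + (lam : ℝ)) / (1 - (lam : ℝ))) * maxAbs hk z)
    (a : Fin (k-1) → ℝ) (ha : StrictMono a) (ε : ℝ) (hε : 0 ≤ ε) (n : ℕ) :
    omegaSet hk φ a ε ⊆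
      ⋃ ω ∈ itinE hk φ a ε n,
        Set.Icc (wcomp φ ω 0 - (1 + 2*r) * (lam : ℝ)^n)
                (wcomp φ ω 0 + (1 + 2*r) * (lam : ℝ)^n) := by
  have hlam1 : (lam : ℝ) < 1 := hlam
  have hlam0 : (0:ℝ) ≤ lam := lam.coe_nonneg
  -- maxAbs nonneg
  set M := maxAbs hk z with hM
  have hzle : ∀ i, |z i| ≤ M := by
    intro i
    rw [hM, maxAbs]
    exact Finset.le_sup' (fun i => |z i|) (Finset.mem_univ i)
  have hM0 : 0 ≤ M := le_trans (abs_nonneg _) (hzle ⟨0, by omega⟩)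
  have hr0 : 0 ≤ r := by
    rw [hr]
    apply mul_nonneg (div_nonneg (by linarith) (by linarith)) hM0
  -- step bound
  have hstep : ∀ (i : Fin k) (x : ℝ), |x| ≤ r → |φ i x| ≤ r := by
    intro i x hx
    have hzi : |z i| ≤ M := hzle i
    have h1 : |φ i x - z i| ≤ (lam : ℝ) * |x - z i| := by
      have := (hlip i).dist_le_mul x (z i)
      simpa [Real.dist_eq, hz i] using this
    have h2 : |x - z i| ≤ |x| + |z i| := abs_sub _ _
    have h3 : |φ i x| ≤ |φ i x - z i| + |z i| := by
      calc |φ i x| = |(φ i x - z i) + z i| := by ring_nf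
        _ ≤ |φ i x - z i| + |z i| := abs_add_le _ _
    have hrM : (1 - (lam : ℝ)) * r = (1 + (lam : ℝ)) * M := by
      have hne : (1 : ℝ) - (lam : ℝ) ≠ 0 := by linarith
      rw [hr]; field_simp
    nlinarith [abs_nonneg (x - z i), abs_nonneg (φ i x - z i)]
  have hbnd : ∀ {N : ℕ} (ω : Fin N → Fin k), |wcomp φ ω 0| ≤ r := by
    intro N ω
    exact foldl_bound φ r hstep _ 0 (by simpa using hr0)
  -- the target set is closed
  set T : Set ℝ := ⋃ ω ∈ itinE hk φ a ε n,
      Set.Icc (wcomp φ ω 0 - (1 + 2*r) * (lam : ℝ)^n)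
              (wcomp φ ω 0 + (1 + 2*r) * (lam : ℝ)^n) with hT
  have hTclosed : IsClosed T := by
    apply Set.Finite.isClosed_biUnion (Set.toFinite _)
    intro ω _
    exact isClosed_Icc
  intro y hy
  have hy' : y ∈ closure {y : ℝ | ∃ N, n ≤ N ∧ ∃ ω ∈ itinE hk φ a ε N, wcomp φ ω 0 = y} := by
    rw [omegaSet, Set.mem_iInter] at hy
    exact hy n
  refine closure_minimal ?_ hTclosed hy'
  rintro _ ⟨N, hnN, ω, ⟨δ, hδ, x, hreg, hit⟩, rfl⟩
  set m := N - n with hm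
  have hNmn : N = m + n := by omega
  -- the suffix itinerary
  set ω' : Fin n → Fin k := fun j => ω ⟨m + (j : ℕ), by omega⟩ with hω'
  have hω'mem : ω' ∈ itinE hk φ a ε n := by
    refine ⟨δ, hδ, (pc hk φ (fun i => a i + δ))^[m] x, ?_, ?_⟩
    · intro j hj
      rw [← Function.iterate_add_apply, Nat.add_comm j m]
      exact hreg (m + j) (by omega)
    · intro j
      show ω ⟨m + (j : ℕ), by omega⟩ = _
      rw [← Function.iterate_add_apply, Nat.add_comm (j : ℕ) m]
      simpa using hit ⟨m + (j : ℕ), by omega⟩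
  -- distance estimate
  obtain ⟨u, hu_bnd, hsplit⟩ : ∃ u, |u| ≤ r ∧ wcomp φ ω 0 = wcomp φ ω' u :=
    ⟨_, hbnd _, wcomp_split φ hNmn ω 0⟩
  have hlipw : |wcomp φ ω' u - wcomp φ ω' 0| ≤ (lam : ℝ)^n * |u| := by
    have h := (foldl_lip φ lam hlip (List.ofFn ω')).dist_le_mul u 0
    simp only [List.length_ofFn] at h
    simpa [wcomp, Real.dist_eq, NNReal.coe_pow] using h
  have hdist : |wcomp φ ω 0 - wcomp φ ω' 0| ≤ r * (lam : ℝ)^n := by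
    rw [hsplit]
    calc |wcomp φ ω' u - wcomp φ ω' 0| ≤ (lam : ℝ)^n * |u| := hlipw
      _ ≤ (lam : ℝ)^n * r := by
          exact mul_le_mul_of_nonneg_left hu_bnd (pow_nonneg hlam0 n)
      _ = r * (lam : ℝ)^n := mul_comm _ _
  have hpow0 : (0:ℝ) ≤ (lam : ℝ)^n := pow_nonneg hlam0 n
  have hfinal : |wcomp φ ω 0 - wcomp φ ω' 0| ≤ (1 + 2*r) * (lam : ℝ)^n := by
    refine hdist.trans ?_
    nlinarith
  rw [abs_le] at hfinal
  exact Set.mem_biUnion hω'mem ⟨by linarith [hfinal.1], by linarith [hfinal.2]⟩
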